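/- arXiv:1603.02220 — 3 statements merged into one kernel-verified Lean document; each statement's English description precedes it below -/
import Mathlib

section
/- Let e ≥ 2, s ∈ ℤ^l, and suppose m₁, m₂ ∈ ℚ^l both avoid the hyperplanes 𝔪_{i,j,N} = {m : s_i − m_i − (s_j − m_j) = N·e} and lie in the same open chamber of the complement (i.e., for every i, j, N, the sign of s_i − m_{1,i} − (s_j − m_{1,j}) − N·e equals the sign of s_i − m_{2,i} − (s_j − m_{2,j}) − N·e). Then for any two nodes γ = (a,b,c), γ' = (a',b',c') with the same residue mod e, one has b−a+m_{1,c} < b'−a'+m_{1,c'} if and only if b−a+m_{2,c} < b'−a'+m_{2,c'}. -/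
/-- if `m₁` and `m₂` both avoid the hyperplanes `𝔪_{i,j,N}` and lie in the
same open chamber of the complement, then the orders `≼_{m₁}` and `≼_{m₂}` coincide on
pairs of nodes with the same residue mod `e`. -/
theorem stmt1 (e : ℤ) (he : 2 ≤ e) (l : ℕ) (hl : 1 ≤ l) (s : Fin l → ℤ)
    (m₁ m₂ : Fin l → ℚ)
    (havoid₁ : ∀ (i j : Fin l) (N : ℤ), i ≠ j →
      (s i : ℚ) - m₁ i - ((s j : ℚ) - m₁ j) ≠ (N : ℚ) * (e : ℚ))
    (havoid₂ : ∀ (i j : Fin l) (N : ℤ), i ≠ j →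
      (s i : ℚ) - m₂ i - ((s j : ℚ) - m₂ j) ≠ (N : ℚ) * (e : ℚ))
    (hchamber : ∀ (i j : Fin l) (N : ℤ), i ≠ j →
      (0 < (s i : ℚ) - m₁ i - ((s j : ℚ) - m₁ j) - (N : ℚ) * (e : ℚ) ↔
        0 < (s i : ℚ) - m₂ i - ((s j : ℚ) - m₂ j) - (N : ℚ) * (e : ℚ)))
    (a b : ℕ) (c : Fin l) (a' b' : ℕ) (c' : Fin l)
    (ha : 1 ≤ a) (hb : 1 ≤ b) (ha' : 1 ≤ a') (hb' : 1 ≤ b')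
    (hres : ((b : ℤ) - (a : ℤ) + s c) ≡ ((b' : ℤ) - (a' : ℤ) + s c') [ZMOD e]) :
    ((b : ℚ) - (a : ℚ) + m₁ c < (b' : ℚ) - (a' : ℚ) + m₁ c' ↔
      (b : ℚ) - (a : ℚ) + m₂ c < (b' : ℚ) - (a' : ℚ) + m₂ c') := by
  have hdvd : e ∣ (((b':ℤ) - a' + s c') - ((b:ℤ) - a + s c)) := Int.ModEq.dvd hres
  obtain ⟨K, hK⟩ := hdvd
  -- rational version
  have hKq : ((b':ℚ) - a' + (s c' : ℚ)) - ((b:ℚ) - a + (s c : ℚ)) = (e:ℚ) * (K:ℚ) := by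
    exact_mod_cast congrArg (Int.cast : ℤ → ℚ) hK
  by_cases hc : c = c'
  · subst hc
    constructor <;> intro h <;> nlinarith [h, hKq]
  · have h1 := hchamber c c' (-K) hc
    push_cast at h1
    constructor <;> intro h
    · have : 0 < (s c : ℚ) - m₁ c - ((s c' : ℚ) - m₁ c') - -(K:ℚ) * (e:ℚ) := by nlinarith
      have := h1.mp this
      nlinarith
    · have : 0 < (s c : ℚ) - m₂ c - ((s c' : ℚ) - m₂ c') - -(K:ℚ) * (e:ℚ) := by nlinarith
      have := h1.mpr this
      nlinarith
end

section
/- Let e ≥ 2, s ∈ ℤ^l, and n ∈ ℕ. Suppose m₁, m₂ ∈ ℚ^l avoid all hyperplanes 𝔪_{i,j,N} and are separated only by a single wall 𝔪_{i₀,j₀,N₀} with |N₀·e + (s_{j₀} − s_{i₀})| > n (i.e., for all other triples (i,j,N) the signs of s_i − m_{1,i} − (s_j − m_{1,j}) − N·e and s_i − m_{2,i} − (s_j − m_{2,j}) − N·e agree). Then the orders ≼_{m₁} and ≼_{m₂} agree on all same-residue nodes of any l-partition of rank n: if γ = (a,b,c) and γ' = (a',b',c') are nodes of an l-partition of n with b−a+s_c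 ≡ b'−a'+s_{c'} (mod e), then b−a+m_{1,c} < b'−a'+m_{1,c'} iff b−a+m_{2,c} < b'−a'+m_{2,c'}. -/
lemma stmt2_aux {l : ℕ} (n : ℕ) (lam : Fin l → ℕ → ℕ) (hlam : ∀ c, Antitone (lam c))
    (hvanish : ∀ (c : Fin l) (a : ℕ), n ≤ a → lam c a = 0)
    (hrank : (∑ c : Fin l, ∑ a ∈ Finset.range n, lam c a) = n)
    (a b : ℕ) (c : Fin l) (a' b' : ℕ) (c' : Fin l)
    (hmem : b < lam c a) (hmem' : b' < lam c' a') (hcc : c ≠ c') :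
    b + a' + 2 ≤ n := by
  have ha : a < n := by
    by_contra h
    have := hvanish c a (le_of_not_gt h); omega
  have ha' : a' < n := by
    by_contra h
    have := hvanish c' a' (le_of_not_gt h); omega
  have h1 : b + 1 ≤ ∑ k ∈ Finset.range n, lam c k := by
    have := Finset.single_le_sum (f := lam c) (fun i _ => Nat.zero_le _)
      (Finset.mem_range.mpr ha)
    omega
  have h2 : a' + 1 ≤ ∑ k ∈ Finset.range n, lam c' k := by
    calc a' + 1 = ∑ k ∈ Finset.range (a' + 1), 1 := by simp
    _ ≤ ∑ k ∈ Finset.range (a' + 1), lam c' k := by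
        apply Finset.sum_le_sum
        intro i hi
        have : lam c' a' ≤ lam c' i := hlam c' (Nat.lt_succ_iff.mp (Finset.mem_range.mp hi))
        omega
    _ ≤ ∑ k ∈ Finset.range n, lam c' k := by
        apply Finset.sum_le_sum_of_subset
        exact Finset.range_subset_range.mpr ha'
  have h3 : (∑ k ∈ Finset.range n, lam c k) + (∑ k ∈ Finset.range n, lam c' k)
      ≤ ∑ x : Fin l, ∑ k ∈ Finset.range n, lam x k := by
    have := Finset.sum_le_sum_of_subset
      (f := fun x => ∑ k ∈ Finset.range n, lam x k)
      (Finset.subset_univ {c, c'})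
    rwa [Finset.sum_pair hcc] at this
  omega


/-- if `m₁` and `m₂` avoid all hyperplanes and are separated only by a single
wall `𝔪_{i₀,j₀,N₀}` with `|N₀·e + (s_{j₀} − s_{i₀})| > n`, then the orders `≼_{m₁}` and
`≼_{m₂}` agree on all same-residue nodes of any `l`-partition of rank `n`. -/
theorem stmt2 (e : ℤ) (he : 2 ≤ e) (l : ℕ) (hl : 1 ≤ l) (n : ℕ) (s : Fin l → ℤ)
    (m₁ m₂ : Fin l → ℚ)
    (havoid₁ : ∀ (i j : Fin l) (N : ℤ), i ≠ j →
      (s i : ℚ) - m₁ i - ((s j : ℚ) - m₁ j) ≠ (N : ℚ) * (e : ℚ))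
    (havoid₂ : ∀ (i j : Fin l) (N : ℤ), i ≠ j →
      (s i : ℚ) - m₂ i - ((s j : ℚ) - m₂ j) ≠ (N : ℚ) * (e : ℚ))
    (i₀ j₀ : Fin l) (N₀ : ℤ) (hi₀j₀ : i₀ ≠ j₀)
    (hfar : (n : ℤ) < |N₀ * e + (s j₀ - s i₀)|)
    -- `m₁` and `m₂` are separated only by the wall `𝔪_{i₀,j₀,N₀}` : for every other
    -- wall (taking into account `𝔪_{i,j,N} = 𝔪_{j,i,-N}`), the signs agree.
    (hsep : ∀ (i j : Fin l) (N : ℤ), i ≠ j →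
      ¬((i, j, N) = (i₀, j₀, N₀) ∨ (i, j, N) = (j₀, i₀, -N₀)) →
      (0 < (s i : ℚ) - m₁ i - ((s j : ℚ) - m₁ j) - (N : ℚ) * (e : ℚ) ↔
        0 < (s i : ℚ) - m₂ i - ((s j : ℚ) - m₂ j) - (N : ℚ) * (e : ℚ)))
    -- an `l`-partition of rank `n` (0-indexed rows)
    (lam : Fin l → ℕ → ℕ) (hlam : ∀ c, Antitone (lam c))
    (hvanish : ∀ (c : Fin l) (a : ℕ), n ≤ a → lam c a = 0)
    (hrank : (∑ c : Fin l, ∑ a ∈ Finset.range n, lam c a) = n)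
    -- two nodes of `lam` with the same residue mod `e`
    (a b : ℕ) (c : Fin l) (a' b' : ℕ) (c' : Fin l)
    (hmem : b < lam c a) (hmem' : b' < lam c' a')
    (hres : ((b : ℤ) - (a : ℤ) + s c) ≡ ((b' : ℤ) - (a' : ℤ) + s c') [ZMOD e]) :
    ((b : ℚ) - (a : ℚ) + m₁ c < (b' : ℚ) - (a' : ℚ) + m₁ c' ↔
      (b : ℚ) - (a : ℚ) + m₂ c < (b' : ℚ) - (a' : ℚ) + m₂ c') := by
  by_cases hcc : c = c'
  · subst hcc
    constructor <;> intro h <;> linarith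
  · have hd1 : b + a' + 2 ≤ n := stmt2_aux n lam hlam hvanish hrank a b c a' b' c' hmem hmem' hcc
    have hd2 : b' + a + 2 ≤ n := stmt2_aux n lam hlam hvanish hrank a' b' c' a b c hmem' hmem (Ne.symm hcc)
    obtain ⟨M, hM⟩ : e ∣ (((b : ℤ) - a + s c) - ((b' : ℤ) - a' + s c')) := hres.symm.dvd
    have hdle : ((b : ℤ) - a) - ((b' : ℤ) - a') ≤ n := by omega
    have hdge : -(n : ℤ) ≤ ((b : ℤ) - a) - ((b' : ℤ) - a') := by omega
    have hwall : ¬(((c, c', M) : Fin l × Fin l × ℤ) = (i₀, j₀, N₀) ∨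
        ((c, c', M) : Fin l × Fin l × ℤ) = (j₀, i₀, -N₀)) := by
      rintro (h | h) <;>
      · simp only [Prod.mk.injEq] at h
        obtain ⟨rfl, rfl, rfl⟩ := h
        rw [lt_abs] at hfar
        rcases hfar with hfar | hfar <;> linarith [hM]
    have hiff := hsep c c' M hcc hwall
    have hMQ : ((b : ℚ) - a + s c) - ((b' : ℚ) - a' + s c') = (e : ℚ) * M := by
      exact_mod_cast hM
    constructor <;> intro h
    · have : 0 < (s c : ℚ) - m₁ c - ((s c' : ℚ) - m₁ c') - (M : ℚ) * (e : ℚ) := by linarith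
      have := hiff.mp this
      linarith
    · have : 0 < (s c : ℚ) - m₂ c - ((s c' : ℚ) - m₂ c') - (M : ℚ) * (e : ℚ) := by linarith
      have := hiff.mpr this
      linarith
end

section
/- Let s₁, s₂ ∈ ℤ and let (λ¹, λ²) be a bipartition of n. The map (λ¹,λ²) ↦ (λ̃¹,λ̃²) defined via symbols (for s₂ ≥ s₁: form the two-row symbol S(λ¹,λ²) with rows L₁ = (s₂−d+λ¹_{d+1+s₁−s₂}, …, s₁+λ¹₁) and L₂ = (s₂−d+λ²_{d+1}, …, s₂+λ²₁) where d ≥ |s₁−s₂| is minimal with λ¹_{d+1−|s₁−s₂|} = λ²_{d+1−|s₁−s₂|} = 0; then iteratively, taking x₁ = min L₁, matching it to y₁ = max{z ∈ L₂ : z ≤ x₁} if min L₂ ≤ x₁ and y₁ = max L₂ otherwise, and repeating on L₁∖{x₁}, L₂∖{y₁}; finally letting L̃₁ be the reordering of {y₁,…} and L̃₂ the reordering of (L₂ ∖ {y₁,…}) ∪ L₁) preserves the rank: |λ̃¹| + |λ̃²| = |λ¹| + |λ²| = n. -/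
/-- The row of the symbol of a partition `p` (0-indexed, `p i = λ_{i+1}`) with leftmost
entry based at `base` and of length `L`: entries `base + k + λ_{L−k}` for `k = 0,…,L−1`. -/
def symbolRow (p : ℕ → ℕ) (base : ℤ) (L : ℕ) : Finset ℤ :=
  (Finset.range L).image (fun k : ℕ => base + (k : ℤ) + ((p (L - 1 - k) : ℕ) : ℤ))

/-- The matching procedure: `x₁ = min X` is matched to
`y₁ = max {z ∈ Y : z ≤ x₁}` if such `z` exists, else `y₁ = max Y`; then repeat on
`X ∖ {x₁}`, `Y ∖ {y₁}`. Returns the set `Ỹ = {y₁, y₂, …} ⊆ Y` of matched entries. -/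
def matchSet (X Y : Finset ℤ) : Finset ℤ :=
  if hX : X.Nonempty then
    if hY : Y.Nonempty then
      let x := X.min' hX
      let y := if h : (Y.filter (fun z => z ≤ x)).Nonempty
        then (Y.filter (fun z => z ≤ x)).max' h
        else Y.max' hY
      insert y (matchSet (X.erase x) (Y.erase y))
    else ∅
  else ∅
termination_by X.card
decreasing_by exact Finset.card_erase_lt_of_mem (X.min'_mem hX)


lemma matchSet_empty_left (X Y : Finset ℤ) (h : ¬X.Nonempty) : matchSet X Y = ∅ := by
  rw [matchSet, dif_neg h]

lemma matchSet_empty_right (X Y : Finset ℤ) (h : ¬Y.Nonempty) : matchSet X Y = ∅ := by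
  rw [matchSet]
  by_cases hX : X.Nonempty
  · rw [dif_pos hX, dif_neg h]
  · rw [dif_neg hX]

lemma matchSet_spec (X Y : Finset ℤ) (hX : X.Nonempty) (hY : Y.Nonempty) :
    ∃ y, y ∈ Y ∧ (∀ w ∈ Y, w ≤ X.min' hX → w ≤ y ∧ y ≤ X.min' hX) ∧
      matchSet X Y = insert y (matchSet (X.erase (X.min' hX)) (Y.erase y)) := by
  rw [matchSet, dif_pos hX, dif_pos hY]
  refine ⟨_, ?_, ?_, rfl⟩
  · by_cases h : (Y.filter (fun z => z ≤ X.min' hX)).Nonempty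
    · rw [dif_pos h]
      exact Finset.mem_of_mem_filter _ (Finset.max'_mem _ h)
    · rw [dif_neg h]
      exact Finset.max'_mem _ hY
  · intro w hw hwx
    have hmem : w ∈ Y.filter (fun z => z ≤ X.min' hX) := Finset.mem_filter.mpr ⟨hw, hwx⟩
    have h : (Y.filter (fun z => z ≤ X.min' hX)).Nonempty := ⟨w, hmem⟩
    rw [dif_pos h]
    refine ⟨Finset.le_max' _ _ hmem, ?_⟩
    have := Finset.max'_mem _ h
    exact (Finset.mem_filter.mp this).2

theorem matchSet_subset (X Y : Finset ℤ) : matchSet X Y ⊆ Y := by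
  by_cases hX : X.Nonempty
  · by_cases hY : Y.Nonempty
    · obtain ⟨y, hyY, -, heq⟩ := matchSet_spec X Y hX hY
      rw [heq]
      intro w hw
      rcases Finset.mem_insert.mp hw with rfl | hw
      · exact hyY
      · exact Finset.erase_subset _ _ (matchSet_subset _ _ hw)
    · rw [matchSet_empty_right _ _ hY]; simp
  · rw [matchSet_empty_left _ _ hX]; simp
termination_by X.card
decreasing_by exact Finset.card_erase_lt_of_mem (X.min'_mem hX)

theorem matchSet_card (X Y : Finset ℤ) (h : X.card ≤ Y.card) :
    (matchSet X Y).card = X.card := by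
  by_cases hX : X.Nonempty
  · have hY : Y.Nonempty := Finset.card_pos.mp (lt_of_lt_of_le (Finset.card_pos.mpr hX) h)
    obtain ⟨y, hyY, -, heq⟩ := matchSet_spec X Y hX hY
    have hsub : matchSet (X.erase (X.min' hX)) (Y.erase y) ⊆ Y.erase y :=
      matchSet_subset _ _
    have hy' : y ∉ matchSet (X.erase (X.min' hX)) (Y.erase y) := by
      intro hc
      exact (Finset.notMem_erase y Y) (hsub hc)
    have hcard : (X.erase (X.min' hX)).card ≤ (Y.erase y).card := by
      rw [Finset.card_erase_of_mem (X.min'_mem hX), Finset.card_erase_of_mem hyY]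
      omega
    rw [heq, Finset.card_insert_of_notMem hy', matchSet_card _ _ hcard,
      Finset.card_erase_of_mem (X.min'_mem hX)]
    have : 0 < X.card := Finset.card_pos.mpr hX
    omega
  · rw [matchSet_empty_left _ _ hX]
    simp [Finset.not_nonempty_iff_eq_empty.mp hX]
termination_by X.card
decreasing_by exact Finset.card_erase_lt_of_mem (X.min'_mem hX)

theorem inter_subset_matchSet (X Y : Finset ℤ) (h : X.card ≤ Y.card) :
    X ∩ Y ⊆ matchSet X Y := by
  by_cases hX : X.Nonempty
  · have hY : Y.Nonempty := Finset.card_pos.mp (lt_of_lt_of_le (Finset.card_pos.mpr hX) h)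
    obtain ⟨y, hyY, hspec, heq⟩ := matchSet_spec X Y hX hY
    rw [heq]
    intro w hw
    obtain ⟨hwX, hwY⟩ := Finset.mem_inter.mp hw
    by_cases hwy : w = y
    · exact Finset.mem_insert.mpr (Or.inl hwy)
    · refine Finset.mem_insert.mpr (Or.inr ?_)
      have hwx : w ≠ X.min' hX := by
        intro he
        obtain ⟨h1, h2⟩ := hspec w hwY he.le
        exact hwy (le_antisymm h1 (by rw [he]; exact h2))
      have hcard : (X.erase (X.min' hX)).card ≤ (Y.erase y).card := by
        rw [Finset.card_erase_of_mem (X.min'_mem hX), Finset.card_erase_of_mem hyY]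
        omega
      exact inter_subset_matchSet _ _ hcard
        (Finset.mem_inter.mpr ⟨Finset.mem_erase.mpr ⟨hwx, hwX⟩, Finset.mem_erase.mpr ⟨hwy, hwY⟩⟩)
  · rw [Finset.not_nonempty_iff_eq_empty.mp hX]; simp
termination_by X.card
decreasing_by exact Finset.card_erase_lt_of_mem (X.min'_mem hX)

theorem matchSet_key (X Y : Finset ℤ) (h : X.card ≤ Y.card) (r : ℤ) (hrY : r ∈ Y)
    (hr : r ∉ matchSet X Y) (c : ℤ) :
    (X.filter (fun z => r < z ∧ z < c)).card ≤
      ((matchSet X Y).filter (fun z => r < z ∧ z < c)).card := by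
  by_cases hX : X.Nonempty
  · have hY : Y.Nonempty := Finset.card_pos.mp (lt_of_lt_of_le (Finset.card_pos.mpr hX) h)
    obtain ⟨y, hyY, hspec, heq⟩ := matchSet_spec X Y hX hY
    set x := X.min' hX with hxdef
    have hry : r ≠ y := by
      rintro rfl
      exact hr (heq ▸ Finset.mem_insert_self _ _)
    have hcard : (X.erase x).card ≤ (Y.erase y).card := by
      rw [Finset.card_erase_of_mem (X.min'_mem hX), Finset.card_erase_of_mem hyY]
      omega
    have hrY' : r ∈ Y.erase y := Finset.mem_erase.mpr ⟨hry, hrY⟩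
    have hr' : r ∉ matchSet (X.erase x) (Y.erase y) := by
      intro hc
      exact hr (heq ▸ Finset.mem_insert_of_mem hc)
    have IH := matchSet_key (X.erase x) (Y.erase y) hcard r hrY' hr' c
    have hXsplit : X = insert x (X.erase x) := (Finset.insert_erase (X.min'_mem hX)).symm
    have hy' : y ∉ matchSet (X.erase x) (Y.erase y) := fun hc =>
      (Finset.notMem_erase y Y) (matchSet_subset _ _ hc)
    rw [heq]
    by_cases hPx : r < x ∧ x < c
    · -- then r ≤ x, r ∈ Y, so y ∈ (r, x]
      obtain ⟨h1, h2⟩ := hspec r hrY (le_of_lt hPx.1)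
      have hPy : r < y ∧ y < c := ⟨lt_of_le_of_ne h1 hry, lt_of_le_of_lt h2 hPx.2⟩
      have e1 : X.filter (fun z => r < z ∧ z < c)
          = insert x ((X.erase x).filter (fun z => r < z ∧ z < c)) := by
        conv_lhs => rw [hXsplit]
        rw [Finset.filter_insert, if_pos hPx]
      have e2 : (insert y (matchSet (X.erase x) (Y.erase y))).filter (fun z => r < z ∧ z < c)
          = insert y ((matchSet (X.erase x) (Y.erase y)).filter (fun z => r < z ∧ z < c)) := by
        rw [Finset.filter_insert, if_pos hPy]
      rw [e1, e2, Finset.card_insert_of_notMem (by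
          simp only [Finset.mem_filter]; rintro ⟨hc, -⟩; exact (Finset.notMem_erase x X) hc),
        Finset.card_insert_of_notMem (by
          simp only [Finset.mem_filter]; rintro ⟨hc, -⟩; exact hy' hc)]
      omega
    · have e1 : X.filter (fun z => r < z ∧ z < c)
          = (X.erase x).filter (fun z => r < z ∧ z < c) := by
        conv_lhs => rw [hXsplit]
        rw [Finset.filter_insert, if_neg hPx]
      rw [e1]
      refine le_trans IH (Finset.card_le_card (Finset.filter_subset_filter _ ?_))
      exact Finset.subset_insert _ _
  · rw [Finset.not_nonempty_iff_eq_empty.mp hX]; simp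
termination_by X.card
decreasing_by all_goals exact Finset.card_erase_lt_of_mem (X.min'_mem hX)
section rowlemmas
variable (p : ℕ → ℕ) (base : ℤ) (L : ℕ)

lemma symbolRow_mono (hp : Antitone p) : ∀ k k' : ℕ, k' < L → k < k' →
    base + (k : ℤ) + (p (L - 1 - k) : ℤ) < base + (k' : ℤ) + (p (L - 1 - k') : ℤ) := by
  intro k k' hk' hkk
  have h1 : p (L - 1 - k) ≤ p (L - 1 - k') := hp (by omega)
  have h2 : (p (L - 1 - k) : ℤ) ≤ (p (L - 1 - k') : ℤ) := Int.ofNat_le.mpr h1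
  have : (k : ℤ) < (k' : ℤ) := Int.ofNat_lt.mpr hkk
  omega

lemma symbolRow_injOn (hp : Antitone p) :
    Set.InjOn (fun k : ℕ => base + (k : ℤ) + (p (L - 1 - k) : ℤ)) (Finset.range L) := by
  intro k hk k' hk' he
  simp only [Finset.coe_range, Set.mem_Iio] at hk hk'
  by_contra hne
  rcases lt_or_gt_of_ne hne with h | h
  · exact absurd he (ne_of_lt (symbolRow_mono p base L hp k k' hk' h))
  · exact absurd he.symm (ne_of_lt (symbolRow_mono p base L hp k' k hk h))

lemma symbolRow_card (hp : Antitone p) : (symbolRow p base L).card = L := by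
  rw [symbolRow, Finset.card_image_of_injOn (symbolRow_injOn p base L hp), Finset.card_range]

lemma symbolRow_base_le {z : ℤ} (hz : z ∈ symbolRow p base L) : base ≤ z := by
  simp only [symbolRow, Finset.mem_image, Finset.mem_range] at hz
  obtain ⟨k, hk, rfl⟩ := hz
  have : (0:ℤ) ≤ (k:ℤ) := Int.ofNat_nonneg k
  have : (0:ℤ) ≤ (p (L-1-k) : ℤ) := Int.ofNat_nonneg _
  omega

lemma symbolRow_sum (hp : Antitone p) :
    ∑ z ∈ symbolRow p base L, z
      = L * base + (∑ k ∈ Finset.range L, (k : ℤ)) + ∑ i ∈ Finset.range L, (p i : ℤ) := by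
  rw [symbolRow, Finset.sum_image (symbolRow_injOn p base L hp)]
  rw [Finset.sum_add_distrib, Finset.sum_add_distrib]
  congr 1
  · congr 1
    rw [Finset.sum_const, Finset.card_range, nsmul_eq_mul]
  · exact Finset.sum_range_reflect (fun i => (p i : ℤ)) L

lemma symbolRow_cond (m : ℕ) :
    ((symbolRow p base L).filter (fun z => z < base + (m : ℤ))).card ≤ m := by
  have hsub : (symbolRow p base L).filter (fun z => z < base + (m : ℤ))
      ⊆ (Finset.range (min L m)).image
        (fun k : ℕ => base + (k : ℤ) + (p (L - 1 - k) : ℤ)) := by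
    intro z hz
    simp only [Finset.mem_filter, symbolRow, Finset.mem_image, Finset.mem_range] at hz ⊢
    obtain ⟨⟨k, hk, rfl⟩, hlt⟩ := hz
    refine ⟨k, ?_, rfl⟩
    have : (0:ℤ) ≤ (p (L-1-k) : ℤ) := Int.ofNat_nonneg _
    have : (k:ℤ) < (m:ℤ) := by omega
    omega
  calc ((symbolRow p base L).filter (fun z => z < base + (m : ℤ))).card
      ≤ _ := Finset.card_le_card hsub
    _ ≤ (Finset.range (min L m)).card := Finset.card_image_le
    _ ≤ m := by rw [Finset.card_range]; omega

end rowlemmas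

lemma reconstruct (S : Finset ℤ) (base : ℤ) (L : ℕ) (hcard : S.card = L)
    (hcond : ∀ m : ℕ, (S.filter (fun z => z < base + (m : ℤ))).card ≤ m) :
    ∃ p : ℕ → ℕ, Antitone p ∧ (∀ i, L ≤ i → p i = 0) ∧ symbolRow p base L = S ∧
      ∑ i ∈ Finset.range L, (p i : ℤ)
        = (∑ z ∈ S, z) - L * base - ∑ k ∈ Finset.range L, (k : ℤ) := by
  classical
  set e := S.orderIsoOfFin hcard with he
  set a : ℕ → ℤ := fun k => if h : k < L then (e ⟨k, h⟩ : ℤ) else 0 with ha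
  have hmem : ∀ k, k < L → a k ∈ S := by
    intro k hk
    simp only [ha, dif_pos hk]
    exact (e ⟨k, hk⟩).2
  have hamono : ∀ k k', k < k' → k' < L → a k < a k' := by
    intro k k' hkk hk'
    have hk : k < L := lt_trans hkk hk'
    simp only [ha, dif_pos hk, dif_pos hk']
    exact_mod_cast e.strictMono (show (⟨k, hk⟩ : Fin L) < ⟨k', hk'⟩ from hkk)
  have hsurj : ∀ z ∈ S, ∃ k, k < L ∧ a k = z := by
    intro z hz
    refine ⟨(e.symm ⟨z, hz⟩ : Fin L).1, (e.symm ⟨z, hz⟩).2, ?_⟩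
    simp only [ha, dif_pos (e.symm ⟨z, hz⟩).2]
    rw [show (⟨(e.symm ⟨z, hz⟩ : Fin L).1, (e.symm ⟨z, hz⟩).2⟩ : Fin L) = e.symm ⟨z, hz⟩ from rfl]
    rw [OrderIso.apply_symm_apply]
  have hlb : ∀ k, k < L → base + (k : ℤ) ≤ a k := by
    intro k hk
    by_contra hcon
    push_neg at hcon
    have hsub : (Finset.range (k+1)).image a ⊆ S.filter (fun z => z < base + (k : ℤ)) := by
      intro z hz
      simp only [Finset.mem_image, Finset.mem_range] at hz
      obtain ⟨j, hj, rfl⟩ := hz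
      have hjL : j < L := by omega
      refine Finset.mem_filter.mpr ⟨hmem j hjL, ?_⟩
      rcases eq_or_lt_of_le (Nat.lt_succ_iff.mp hj) with rfl | hjk
      · exact hcon
      · exact lt_trans (hamono j k hjk hk) hcon
    have hinj : Set.InjOn a (Finset.range (k+1)) := by
      intro i hi j hj hij
      simp only [Finset.coe_range, Set.mem_Iio] at hi hj
      by_contra hne
      rcases lt_or_gt_of_ne hne with h | h
      · exact absurd hij (ne_of_lt (hamono i j h (by omega)))
      · exact absurd hij.symm (ne_of_lt (hamono j i h (by omega)))
    have := Finset.card_le_card hsub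
    rw [Finset.card_image_of_injOn hinj, Finset.card_range] at this
    have := hcond k
    omega
  have hinj0 : Set.InjOn a (Finset.range L) := by
    intro i hi j hj hij
    simp only [Finset.coe_range, Set.mem_Iio] at hi hj
    by_contra hne
    rcases lt_or_gt_of_ne hne with h | h
    · exact absurd hij (ne_of_lt (hamono i j h hj))
    · exact absurd hij.symm (ne_of_lt (hamono j i h hi))
  have hIm : (Finset.range L).image a = S := by
    apply Finset.eq_of_subset_of_card_le
    · intro z hz
      simp only [Finset.mem_image, Finset.mem_range] at hz
      obtain ⟨k, hk, rfl⟩ := hz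
      exact hmem k hk
    · rw [hcard, Finset.card_image_of_injOn hinj0, Finset.card_range]
  refine ⟨fun i => if h : i < L then (a (L - 1 - i) - base - ((L - 1 - i : ℕ) : ℤ)).toNat else 0,
    ?_, ?_, ?_, ?_⟩
  · apply antitone_nat_of_succ_le
    intro i
    by_cases hi1 : i + 1 < L
    · have hi : i < L := by omega
      simp only [dif_pos hi1, dif_pos hi]
      apply Int.toNat_le_toNat
      have h1 : L - 1 - (i+1) < L - 1 - i := by omega
      have h2 : a (L - 1 - (i+1)) < a (L - 1 - i) := hamono _ _ h1 (by omega)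
      have h3 : ((L - 1 - (i+1) : ℕ) : ℤ) + 1 = ((L - 1 - i : ℕ) : ℤ) := by
        push_cast [show L - 1 - (i+1) + 1 = L - 1 - i from by omega]
        ring_nf
        omega
      omega
    · simp only [dif_neg hi1]
      exact Nat.zero_le _
  · intro i hi
    simp only [dif_neg (by omega : ¬ i < L)]
  · have himg : symbolRow (fun i => if h : i < L then
        (a (L - 1 - i) - base - ((L - 1 - i : ℕ) : ℤ)).toNat else 0) base L
        = (Finset.range L).image a := by
      rw [symbolRow]
      apply Finset.image_congr
      intro k hk
      simp only [Finset.mem_coe, Finset.mem_range] at hk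
      have hk1 : L - 1 - k < L := by omega
      have hk2 : L - 1 - (L - 1 - k) = k := by omega
      simp only [dif_pos hk1, hk2]
      rw [Int.toNat_of_nonneg (by have := hlb k hk; omega)]
      ring
    rw [himg, hIm]
  · have hterm : ∀ i ∈ Finset.range L,
        ((if h : i < L then (a (L - 1 - i) - base - ((L - 1 - i : ℕ) : ℤ)).toNat else 0 : ℕ) : ℤ)
          = a (L - 1 - i) - base - ((L - 1 - i : ℕ) : ℤ) := by
      intro i hi
      simp only [Finset.mem_range] at hi
      rw [dif_pos hi, Int.toNat_of_nonneg (by have := hlb (L-1-i) (by omega); omega)]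
    rw [Finset.sum_congr rfl hterm]
    rw [show (fun i => a (L - 1 - i) - base - ((L - 1 - i : ℕ) : ℤ))
        = (fun j => (fun k => a k - base - ((k:ℕ) : ℤ)) (L - 1 - j)) from rfl]
    rw [Finset.sum_range_reflect (fun k => a k - base - ((k:ℕ) : ℤ)) L]
    have hsumS : ∑ k ∈ Finset.range L, a k = ∑ z ∈ S, z := by
      rw [← hIm]
      exact (Finset.sum_image (g := a) (f := fun z => z) (fun x hx y hy h => hinj0 hx hy h)).symm
    rw [Finset.sum_sub_distrib, Finset.sum_sub_distrib, hsumS, Finset.sum_const,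
      Finset.card_range, nsmul_eq_mul]

set_option maxHeartbeats 1000000 in
/-- the symbol-matching map `(λ¹,λ²) ↦ (λ̃¹,λ̃²)` (for `s₁ ≤ s₂`, with
`t = s₂ − s₁`, rows `L₁ = symbolRow λ¹ (s₂−d) (d+1−t)` and `L₂ = symbolRow λ² (s₂−d) (d+1)`,
`L̃₁ = Ỹ` the matched set and `L̃₂ = (L₂ ∖ Ỹ) ∪ L₁`) preserves the rank:
`|λ̃¹| + |λ̃²| = |λ¹| + |λ²| = n`. -/
theorem stmt9 (s₁ s₂ : ℤ) (hs : s₁ ≤ s₂) (n : ℕ)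
    (p q : ℕ → ℕ) (hp : Antitone p) (hq : Antitone q)
    (t : ℕ) (ht : (t : ℤ) = s₂ - s₁)
    (d : ℕ) (hd : t ≤ d) (hpd : p (d - t) = 0) (hqd : q (d - t) = 0)
    (hrank : (∑ i ∈ Finset.range (d + 1), p i) + (∑ i ∈ Finset.range (d + 1), q i) = n) :
    ∃ p' q' : ℕ → ℕ, Antitone p' ∧ Antitone q' ∧
      symbolRow p' (s₂ - d) (d + 1 - t) =
        matchSet (symbolRow p (s₂ - d) (d + 1 - t)) (symbolRow q (s₂ - d) (d + 1)) ∧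
      symbolRow q' (s₂ - d) (d + 1) =
        ((symbolRow q (s₂ - d) (d + 1)) \
            matchSet (symbolRow p (s₂ - d) (d + 1 - t)) (symbolRow q (s₂ - d) (d + 1))) ∪
          (symbolRow p (s₂ - d) (d + 1 - t)) ∧
      (∑ i ∈ Finset.range (d + 1), p' i) + (∑ i ∈ Finset.range (d + 1), q' i) = n := by
  classical
  set base : ℤ := s₂ - d with hbase
  set X := symbolRow p base (d + 1 - t) with hXdef
  set Y := symbolRow q base (d + 1) with hYdef
  set T := matchSet X Y with hTdef
  have hXcard : X.card = d + 1 - t := symbolRow_card p base _ hp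
  have hYcard : Y.card = d + 1 := symbolRow_card q base _ hq
  have hle : X.card ≤ Y.card := by omega
  have hTsub : T ⊆ Y := matchSet_subset X Y
  have hTcard : T.card = d + 1 - t := by rw [hTdef, matchSet_card X Y hle, hXcard]
  have hXY : X ∩ Y ⊆ T := inter_subset_matchSet X Y hle
  have hdisj : Disjoint (Y \ T) X := by
    rw [Finset.disjoint_left]
    intro w hw hwX
    obtain ⟨hwY, hwT⟩ := Finset.mem_sdiff.mp hw
    exact hwT (hXY (Finset.mem_inter.mpr ⟨hwX, hwY⟩))
  have hRcard : (Y \ T).card = t := by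
    rw [Finset.card_sdiff_of_subset hTsub, hYcard, hTcard]; omega
  have hZcard : ((Y \ T) ∪ X).card = d + 1 := by
    rw [Finset.card_union_of_disjoint hdisj, hRcard, hXcard]; omega
  -- condition for T
  have condT : ∀ m : ℕ, ((T.filter (fun z => z < base + (m : ℤ))).card ≤ m) := by
    intro m
    exact le_trans (Finset.card_le_card (Finset.filter_subset_filter _ hTsub))
      (symbolRow_cond q base (d + 1) m)
  -- condition for Z = (Y \ T) ∪ X
  have condZ : ∀ m : ℕ, ((((Y \ T) ∪ X).filter (fun z => z < base + (m : ℤ))).card ≤ m) := by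
    intro m
    rw [Finset.filter_union]
    by_cases hne : ((Y \ T).filter (fun z => z < base + (m : ℤ))).Nonempty
    · set r := ((Y \ T).filter (fun z => z < base + (m : ℤ))).min' hne with hrdef
      have hrmem := ((Y \ T).filter (fun z => z < base + (m : ℤ))).min'_mem hne
      rw [← hrdef] at hrmem
      obtain ⟨hrR, hrb⟩ := Finset.mem_filter.mp hrmem
      obtain ⟨hrY, hrT⟩ := Finset.mem_sdiff.mp hrR
      have hbr : base ≤ r := symbolRow_base_le q base (d + 1) hrY
      have hkey : (X.filter (fun z => r < z ∧ z < base + (m : ℤ))).card ≤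
          (T.filter (fun z => r < z ∧ z < base + (m : ℤ))).card :=
        matchSet_key X Y hle r hrY hrT (base + (m : ℤ))
      -- T-filter and R-filter inside Ioo r b
      have hIoo : (T.filter (fun z => r < z ∧ z < base + (m : ℤ))) ∪
          ((Y \ T).filter (fun z => r < z ∧ z < base + (m : ℤ))) ⊆ Finset.Ioo r (base + (m : ℤ)) := by
        intro z hz
        rcases Finset.mem_union.mp hz with h | h <;>
          exact Finset.mem_Ioo.mpr (Finset.mem_filter.mp h).2
      have hdisj2 : Disjoint (T.filter (fun z => r < z ∧ z < base + (m : ℤ)))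
          ((Y \ T).filter (fun z => r < z ∧ z < base + (m : ℤ))) := by
        rw [Finset.disjoint_left]
        intro w hw hw2
        exact (Finset.mem_sdiff.mp (Finset.mem_filter.mp hw2).1).2 (Finset.mem_filter.mp hw).1
      have hcard2 : (T.filter (fun z => r < z ∧ z < base + (m : ℤ))).card +
          ((Y \ T).filter (fun z => r < z ∧ z < base + (m : ℤ))).card ≤
          (base + (m : ℤ) - r - 1).toNat := by
        rw [← Finset.card_union_of_disjoint hdisj2]
        calc _ ≤ (Finset.Ioo r (base + (m : ℤ))).card := Finset.card_le_card hIoo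
          _ = _ := Int.card_Ioo _ _
      -- X below r
      have hXlow : (X.filter (fun z => z < r)).card ≤ (r - base).toNat := by
        have := symbolRow_cond p base (d + 1 - t) (r - base).toNat
        rw [show base + ((r - base).toNat : ℤ) = r from by omega] at this
        exact this
      -- split X filter
      have hXsplit : X.filter (fun z => z < base + (m : ℤ)) ⊆
          X.filter (fun z => z < r) ∪ X.filter (fun z => r < z ∧ z < base + (m : ℤ)) := by
        intro z hz
        obtain ⟨hzX, hzb⟩ := Finset.mem_filter.mp hz
        rcases lt_trichotomy z r with h | h | h
        · exact Finset.mem_union_left _ (Finset.mem_filter.mpr ⟨hzX, h⟩)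
        · exfalso
          subst h
          exact hrT (hXY (Finset.mem_inter.mpr ⟨hzX, hrY⟩))
        · exact Finset.mem_union_right _ (Finset.mem_filter.mpr ⟨hzX, h, hzb⟩)
      -- split R filter
      have hRsplit : (Y \ T).filter (fun z => z < base + (m : ℤ)) ⊆
          insert r ((Y \ T).filter (fun z => r < z ∧ z < base + (m : ℤ))) := by
        intro z hz
        obtain ⟨hzR, hzb⟩ := Finset.mem_filter.mp hz
        have hzmem : z ∈ (Y \ T).filter (fun w => w < base + (m : ℤ)) :=
          Finset.mem_filter.mpr ⟨hzR, hzb⟩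
        have hrz : r ≤ z := by
          rw [hrdef]
          exact Finset.min'_le _ _ hzmem
        rcases eq_or_lt_of_le hrz with h | h
        · exact Finset.mem_insert.mpr (Or.inl h.symm)
        · exact Finset.mem_insert.mpr
            (Or.inr (Finset.mem_filter.mpr ⟨hzR, h, hzb⟩))
      have c1 : ((Y \ T).filter (fun z => z < base + (m : ℤ))).card ≤
          1 + ((Y \ T).filter (fun z => r < z ∧ z < base + (m : ℤ))).card := by
        calc _ ≤ _ := Finset.card_le_card hRsplit
          _ ≤ _ := Finset.card_insert_le _ _
          _ = _ := by omega
      have c2 : (X.filter (fun z => z < base + (m : ℤ))).card ≤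
          (X.filter (fun z => z < r)).card +
            (X.filter (fun z => r < z ∧ z < base + (m : ℤ))).card :=
        le_trans (Finset.card_le_card hXsplit) (Finset.card_union_le _ _)
      calc (((Y \ T).filter (fun z => z < base + (m : ℤ))) ∪
            (X.filter (fun z => z < base + (m : ℤ)))).card
          ≤ ((Y \ T).filter (fun z => z < base + (m : ℤ))).card +
            (X.filter (fun z => z < base + (m : ℤ))).card := Finset.card_union_le _ _
        _ ≤ m := by omega
    · rw [Finset.not_nonempty_iff_eq_empty.mp hne, Finset.empty_union]
      exact symbolRow_cond p base (d + 1 - t) m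
  -- reconstruct p' and q'
  obtain ⟨p', hp'anti, hp'0, hp'row, hp'sum⟩ :=
    reconstruct T base (d + 1 - t) hTcard condT
  obtain ⟨q', hq'anti, hq'0, hq'row, hq'sum⟩ :=
    reconstruct ((Y \ T) ∪ X) base (d + 1) hZcard condZ
  refine ⟨p', q', hp'anti, hq'anti, hp'row, hq'row, ?_⟩
  -- sums
  have hsX : ∑ z ∈ X, z = (d + 1 - t : ℕ) * base + (∑ k ∈ Finset.range (d + 1 - t), (k : ℤ))
      + ∑ i ∈ Finset.range (d + 1 - t), (p i : ℤ) := symbolRow_sum p base _ hp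
  have hsY : ∑ z ∈ Y, z = (d + 1 : ℕ) * base + (∑ k ∈ Finset.range (d + 1), (k : ℤ))
      + ∑ i ∈ Finset.range (d + 1), (q i : ℤ) := symbolRow_sum q base _ hq
  have hsumR : (∑ z ∈ Y \ T, z) + ∑ z ∈ T, z = ∑ z ∈ Y, z := Finset.sum_sdiff hTsub
  have hsumZ : ∑ z ∈ (Y \ T) ∪ X, z = (∑ z ∈ Y \ T, z) + ∑ z ∈ X, z :=
    Finset.sum_union hdisj
  have hmain : (∑ i ∈ Finset.range (d + 1 - t), (p' i : ℤ))
      + (∑ i ∈ Finset.range (d + 1), (q' i : ℤ))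
      = (∑ i ∈ Finset.range (d + 1 - t), (p i : ℤ))
      + (∑ i ∈ Finset.range (d + 1), (q i : ℤ)) := by
    rw [hp'sum, hq'sum]
    linarith [hsX, hsY, hsumR, hsumZ]
  -- extend p-sums to range (d+1)
  have hp0 : ∀ i, d + 1 - t ≤ i → p i = 0 := by
    intro i hi
    have : p i ≤ p (d - t) := hp (by omega)
    omega
  have hext : ∀ (f : ℕ → ℕ), (∀ i, d + 1 - t ≤ i → f i = 0) →
      ∑ i ∈ Finset.range (d + 1), (f i : ℤ) = ∑ i ∈ Finset.range (d + 1 - t), (f i : ℤ) := by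
    intro f hf
    refine (Finset.sum_subset (Finset.range_subset_range.mpr (by omega)) ?_).symm
    intro x hx hnx
    rw [Finset.mem_range] at hx
    rw [Finset.mem_range, not_lt] at hnx
    rw [hf x hnx]
    simp
  have hcast : (↑(∑ i ∈ Finset.range (d + 1), p' i + ∑ i ∈ Finset.range (d + 1), q' i) : ℤ)
      = (↑n : ℤ) := by
    push_cast
    rw [hext p' hp'0]
    have hrankZ : (∑ i ∈ Finset.range (d + 1), ((p i : ℤ)))
        + (∑ i ∈ Finset.range (d + 1), ((q i : ℤ))) = (n : ℤ) := by
      exact_mod_cast hrank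
    rw [hext p hp0] at hrankZ
    linarith [hmain, hrankZ]
  exact_mod_cast hcast
end
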